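/- Let n ≥ 2 and let G be the anticycle on the n+3 vertices x, z_1, z_2, y_1,…,y_n, with J = I(H) the edge ideal of the induced antipath H = G \ {x}. Fix 1 ≤ i ≤ j ≤ k ≤ n with i + 2 ≤ k, and let I' = J^2 + (x z_1 z_2 y_l : 1 ≤ l ≤ n) + ( x y_{k'} y_{l'} z_2 : 1 ≤ k' ≤ l' ≤ n, (k',l') ≠ (n,n) ) + ( x y_{k'} y_{l'} z_1 : 1 ≤ k' ≤ l' ≤ n, (k',l') ≠ (1,1) ) + ( x y_{i'} y_{j'} y_{k'} : 1 ≤ i' ≤ j' ≤ k' ≤ n, i' + 2 ≤ k', (i',j',k') strictly dictionary-smaller than (i,j,k) ). Then the colon ideal I' : (x y_i y_j y_k) is generated by a subset of the variables of R. -/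

import Mathlib

open MvPolynomial Finsupp Pointwise

/-! The anticycle `G` on the `n+3` vertices `x, z₁, y₁, …, y_n, z₂`, realized on `Fin (n+3)`
with the cycle labeling `x = 0`, `z₁ = 1`, `y_i = i+1` (so `y_i` has index `i+2` for the
0-indexed `i : Fin n`), `z₂ = n+2`.  The non-edges of `G` are exactly the consecutive pairs
on the cycle `x ∼ z₁ ∼ y₁ ∼ ⋯ ∼ y_n ∼ z₂ ∼ x`. -/

/-- The vertex `x`. -/
def vx (n : ℕ) : Fin (n + 3) := ⟨0, by omega⟩
/-- The vertex `z₁`. -/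
def vz1 (n : ℕ) : Fin (n + 3) := ⟨1, by omega⟩
/-- The vertex `z₂`. -/
def vz2 (n : ℕ) : Fin (n + 3) := ⟨n + 2, by omega⟩
/-- The vertex `y_i` (0-indexed: `vy n i` is `y_{i+1}` of the paper). -/
def vy (n : ℕ) (i : Fin n) : Fin (n + 3) := ⟨(i : ℕ) + 2, by omega⟩

/-- The edge ideal `J = I(H)` of the induced antipath `H = G \ {x}` on the vertices
`z₁, y₁, …, y_n, z₂` (indices `1, …, n+2`): its edges are the pairs of non-consecutive
indices among `1, …, n+2`. -/
noncomputable def Jideal (K : Type*) [Field K] (n : ℕ) :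
    Ideal (MvPolynomial (Fin (n + 3)) K) :=
  Ideal.span { m | ∃ a b : Fin (n + 3),
    1 ≤ (a : ℕ) ∧ (a : ℕ) + 2 ≤ (b : ℕ) ∧ m = X a * X b }

/-! ### Auxiliary combinatorial lemmas -/

/-- Core combinatorial lemma for generators of `J²`. -/
theorem st2d_core2 (i j k a b c d : ℕ) (hij : i ≤ j) (hjk : j ≤ k) (hik : i+2 ≤ k)
    (hab : a+2 ≤ b) (hcd : c+2 ≤ d) :
    ∃ l, (l < j ∨ (i+2 ≤ l ∧ j ≤ l ∧ l < k) ∨ j+2 ≤ l) ∧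
      (((l = a ∨ l = b ∨ l = c ∨ l = d) ∧ (l ≠ i ∧ l ≠ j ∧ l ≠ k)) ∨
       (((l = a ∨ l = b) ∧ (l = c ∨ l = d)) ∧
        ((l ≠ i ∧ l ≠ j) ∨ (l ≠ i ∧ l ≠ k) ∨ (l ≠ j ∧ l ≠ k)))) := by
  by_cases Pa : (a ≠ i ∧ a ≠ j ∧ a ≠ k) ∧ (a < j ∨ (i+2 ≤ a ∧ j ≤ a ∧ a < k) ∨ j+2 ≤ a)
  · exact ⟨a, Pa.2, Or.inl ⟨Or.inl rfl, Pa.1⟩⟩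
  by_cases Pb : (b ≠ i ∧ b ≠ j ∧ b ≠ k) ∧ (b < j ∨ (i+2 ≤ b ∧ j ≤ b ∧ b < k) ∨ j+2 ≤ b)
  · exact ⟨b, Pb.2, Or.inl ⟨Or.inr (Or.inl rfl), Pb.1⟩⟩
  by_cases Pc : (c ≠ i ∧ c ≠ j ∧ c ≠ k) ∧ (c < j ∨ (i+2 ≤ c ∧ j ≤ c ∧ c < k) ∨ j+2 ≤ c)
  · exact ⟨c, Pc.2, Or.inl ⟨Or.inr (Or.inr (Or.inl rfl)), Pc.1⟩⟩
  by_cases Pd : (d ≠ i ∧ d ≠ j ∧ d ≠ k) ∧ (d < j ∨ (i+2 ≤ d ∧ j ≤ d ∧ d < k) ∨ j+2 ≤ d)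
  · exact ⟨d, Pd.2, Or.inl ⟨Or.inr (Or.inr (Or.inr rfl)), Pd.1⟩⟩
  have ha : a = i ∨ a = j ∨ a = k ∨ (a = j+1 ∧ (j+1 < i+2 ∨ k ≤ j+1)) := by omega
  have hb : b = i ∨ b = j ∨ b = k ∨ (b = j+1 ∧ (j+1 < i+2 ∨ k ≤ j+1)) := by omega
  have hc : c = i ∨ c = j ∨ c = k ∨ (c = j+1 ∧ (j+1 < i+2 ∨ k ≤ j+1)) := by omega
  have hd : d = i ∨ d = j ∨ d = k ∨ (d = j+1 ∧ (j+1 < i+2 ∨ k ≤ j+1)) := by omega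
  clear Pa Pb Pc Pd
  by_cases Qi : (i = a ∨ i = b) ∧ (i = c ∨ i = d) ∧ i < j
  · exact ⟨i, by omega, Or.inr ⟨⟨Qi.1, Qi.2.1⟩, by omega⟩⟩
  by_cases Qj : (j = a ∨ j = b) ∧ (j = c ∨ j = d) ∧ i+2 ≤ j ∧ j < k
  · exact ⟨j, by omega, Or.inr ⟨⟨Qj.1, Qj.2.1⟩, by omega⟩⟩
  by_cases Qj1 : (j+1 = a ∨ j+1 = b) ∧ (j+1 = c ∨ j+1 = d) ∧ i+1 ≤ j ∧ j+1 < k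
  · exact ⟨j+1, by omega, Or.inr ⟨⟨Qj1.1, Qj1.2.1⟩, by omega⟩⟩
  by_cases Qk : (k = a ∨ k = b) ∧ (k = c ∨ k = d) ∧ j+2 ≤ k
  · exact ⟨k, by omega, Or.inr ⟨⟨Qk.1, Qk.2.1⟩, by omega⟩⟩
  exfalso
  rcases ha with rfl | rfl | rfl | ⟨rfl, hsa⟩ <;>
    rcases hb with hb | hb | hb | ⟨hb, hsb⟩ <;>
      rcases hc with rfl | rfl | rfl | ⟨rfl, hsc⟩ <;>
        rcases hd with hd | hd | hd | ⟨hd, hsd⟩ <;> omega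

/-- Core combinatorial lemma for the lexicographically smaller triple generators. -/
theorem st2d_core3 (i j k a b c : ℕ) (hij : i ≤ j) (hjk : j ≤ k) (hik : i+2 ≤ k)
    (h1 : a ≤ b) (h2 : b ≤ c) (h3 : a+2 ≤ c)
    (hlex : a < i ∨ (a = i ∧ (b < j ∨ (b = j ∧ c < k)))) :
    ∃ l, (l < j ∨ (i+2 ≤ l ∧ j ≤ l ∧ l < k) ∨ j+2 ≤ l) ∧
      (((l = a ∨ l = b ∨ l = c) ∧ (l ≠ i ∧ l ≠ j ∧ l ≠ k)) ∨
       (((l = a ∧ l = b) ∨ (l = a ∧ l = c) ∨ (l = b ∧ l = c)) ∧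
        ((l ≠ i ∧ l ≠ j) ∨ (l ≠ i ∧ l ≠ k) ∨ (l ≠ j ∧ l ≠ k)))) := by
  rcases hlex with h | ⟨hai, h⟩
  · exact ⟨a, by omega, Or.inl ⟨Or.inl rfl, by omega⟩⟩
  rcases h with h | ⟨hbj, h⟩
  · by_cases hb : b = i
    · exact ⟨b, by omega, Or.inr ⟨Or.inl ⟨by omega, rfl⟩, by omega⟩⟩
    · exact ⟨b, by omega, Or.inl ⟨Or.inr (Or.inl rfl), by omega⟩⟩
  · by_cases hc : c = j
    · exact ⟨c, by omega, Or.inr ⟨Or.inr (Or.inr ⟨by omega, rfl⟩), by omega⟩⟩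
    · exact ⟨c, by omega, Or.inl ⟨Or.inr (Or.inr rfl), by omega⟩⟩

/-! ### Vertex distinctness lemmas -/

theorem vy_val (n : ℕ) (l : Fin n) : ((vy n l : Fin (n+3)) : ℕ) = (l : ℕ) + 2 := rfl

theorem vx_ne_vy (n : ℕ) (l : Fin n) : vx n ≠ vy n l := by
  simp [vx, vy, Fin.ext_iff]

theorem vz1_ne_vy (n : ℕ) (l : Fin n) : vz1 n ≠ vy n l := by
  simp [vz1, vy, Fin.ext_iff]

theorem vz2_ne_vy (n : ℕ) (l : Fin n) : vz2 n ≠ vy n l := by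
  intro h
  have h2 : n + 2 = (l : ℕ) + 2 := congrArg Fin.val h
  have := l.isLt
  omega

theorem vx_ne_vz1 (n : ℕ) : vx n ≠ vz1 n := by
  simp only [vx, vz1, ne_eq, Fin.mk.injEq]
  omega

theorem vx_ne_vz2 (n : ℕ) : vx n ≠ vz2 n := by
  simp only [vx, vz2, ne_eq, Fin.mk.injEq]
  omega

theorem vz1_ne_vz2 (n : ℕ) : vz1 n ≠ vz2 n := by
  simp only [vz1, vz2, ne_eq, Fin.mk.injEq]
  omega

theorem vy_ne_vy (n : ℕ) {a b : Fin n} (h : (a : ℕ) ≠ (b : ℕ)) : vy n a ≠ vy n b := by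
  intro he
  have h2 : (a : ℕ) + 2 = (b : ℕ) + 2 := congrArg Fin.val he
  omega

theorem vy_eq_vy (n : ℕ) {a b : Fin n} (h : (a : ℕ) = (b : ℕ)) : vy n a = vy n b := by
  exact Fin.ext (show (a : ℕ) + 2 = (b : ℕ) + 2 by omega)

/-! ### The exponent-vector model -/

/-- The exponent of the monomial `x y_i y_j y_k`. -/
noncomputable def emv (n : ℕ) (i j k : Fin n) : Fin (n+3) →₀ ℕ :=
  Finsupp.single (vx n) 1 + Finsupp.single (vy n i) 1 +
    Finsupp.single (vy n j) 1 + Finsupp.single (vy n k) 1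

/-- The exponents of the generators of the ideal `I'`. -/
def Tset (n : ℕ) (i j k : Fin n) : Set (Fin (n+3) →₀ ℕ) :=
  {s | ∃ a b c d : Fin (n+3), 1 ≤ (a : ℕ) ∧ (a : ℕ) + 2 ≤ (b : ℕ) ∧
    1 ≤ (c : ℕ) ∧ (c : ℕ) + 2 ≤ (d : ℕ) ∧
    s = (Finsupp.single a 1 + Finsupp.single b 1) +
        (Finsupp.single c 1 + Finsupp.single d 1)} ∪
  {s | ∃ l : Fin n, s = Finsupp.single (vx n) 1 + Finsupp.single (vz1 n) 1 +
        Finsupp.single (vz2 n) 1 + Finsupp.single (vy n l) 1} ∪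
  {s | ∃ k' l' : Fin n, k' ≤ l' ∧ ¬((k' : ℕ) = n - 1 ∧ (l' : ℕ) = n - 1) ∧
    s = Finsupp.single (vx n) 1 + Finsupp.single (vy n k') 1 +
        Finsupp.single (vy n l') 1 + Finsupp.single (vz2 n) 1} ∪
  {s | ∃ k' l' : Fin n, k' ≤ l' ∧ ¬((k' : ℕ) = 0 ∧ (l' : ℕ) = 0) ∧
    s = Finsupp.single (vx n) 1 + Finsupp.single (vy n k') 1 +
        Finsupp.single (vy n l') 1 + Finsupp.single (vz1 n) 1} ∪
  {s | ∃ i' j' k' : Fin n, i' ≤ j' ∧ j' ≤ k' ∧ (i' : ℕ) + 2 ≤ (k' : ℕ) ∧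
    (i' < i ∨ (i' = i ∧ (j' < j ∨ (j' = j ∧ k' < k)))) ∧
    s = Finsupp.single (vx n) 1 + Finsupp.single (vy n i') 1 +
        Finsupp.single (vy n j') 1 + Finsupp.single (vy n k') 1}

/-! ### Products of variables as monomials -/

theorem st2d_X2 {σ : Type*} {K : Type*} [CommSemiring K] (a b : σ) :
    (X a * X b : MvPolynomial σ K) =
      monomial (Finsupp.single a 1 + Finsupp.single b 1) 1 := by
  rw [X, X, monomial_mul, one_mul]

theorem st2d_X4 {σ : Type*} {K : Type*} [CommSemiring K] (a b c d : σ) :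
    (X a * X b * X c * X d : MvPolynomial σ K) =
      monomial (Finsupp.single a 1 + Finsupp.single b 1 + Finsupp.single c 1 +
        Finsupp.single d 1) 1 := by
  rw [X, X, X, X, monomial_mul, monomial_mul, monomial_mul, one_mul, one_mul, one_mul]

/-! ### Evaluations of `emv` -/

theorem emv_z1 (n : ℕ) (i j k : Fin n) : emv n i j k (vz1 n) = 0 := by
  unfold emv
  rw [Finsupp.add_apply, Finsupp.add_apply, Finsupp.add_apply,
    Finsupp.single_eq_of_ne' (vx_ne_vz1 n),
    Finsupp.single_eq_of_ne' (Ne.symm (vz1_ne_vy n i)),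
    Finsupp.single_eq_of_ne' (Ne.symm (vz1_ne_vy n j)),
    Finsupp.single_eq_of_ne' (Ne.symm (vz1_ne_vy n k))]
  omega

theorem emv_z2 (n : ℕ) (i j k : Fin n) : emv n i j k (vz2 n) = 0 := by
  unfold emv
  rw [Finsupp.add_apply, Finsupp.add_apply, Finsupp.add_apply,
    Finsupp.single_eq_of_ne' (vx_ne_vz2 n),
    Finsupp.single_eq_of_ne' (Ne.symm (vz2_ne_vy n i)),
    Finsupp.single_eq_of_ne' (Ne.symm (vz2_ne_vy n j)),
    Finsupp.single_eq_of_ne' (Ne.symm (vz2_ne_vy n k))]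
  omega

theorem yy_apply (n : ℕ) (a b : Fin n) :
    (Finsupp.single (vy n a) 1 : Fin (n+3) →₀ ℕ) (vy n b) =
      if (a : ℕ) = (b : ℕ) then 1 else 0 := by
  rw [Finsupp.single_apply]
  by_cases h : (a : ℕ) = (b : ℕ)
  · rw [if_pos (vy_eq_vy n h), if_pos h]
  · rw [if_neg (vy_ne_vy n h), if_neg h]

theorem emv_y (n : ℕ) (i j k : Fin n) (l : Fin n) :
    emv n i j k (vy n l) =
      (if (i : ℕ) = (l : ℕ) then 1 else 0) + (if (j : ℕ) = (l : ℕ) then 1 else 0) +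
        (if (k : ℕ) = (l : ℕ) then 1 else 0) := by
  unfold emv
  rw [Finsupp.add_apply, Finsupp.add_apply, Finsupp.add_apply,
    Finsupp.single_eq_of_ne' (vx_ne_vy n l), yy_apply, yy_apply, yy_apply]
  omega

theorem emv_eq_zero (n : ℕ) (i j k : Fin n) (w : Fin n) (h1 : (i : ℕ) ≠ (w : ℕ))
    (h2 : (j : ℕ) ≠ (w : ℕ)) (h3 : (k : ℕ) ≠ (w : ℕ)) : emv n i j k (vy n w) = 0 := by
  rw [emv_y, if_neg h1, if_neg h2, if_neg h3]

theorem emv_le_one (n : ℕ) (i j k : Fin n) (w : Fin n)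
    (h : ((i : ℕ) ≠ (w : ℕ) ∧ (j : ℕ) ≠ (w : ℕ)) ∨ ((i : ℕ) ≠ (w : ℕ) ∧ (k : ℕ) ≠ (w : ℕ)) ∨
      ((j : ℕ) ≠ (w : ℕ) ∧ (k : ℕ) ≠ (w : ℕ))) : emv n i j k (vy n w) ≤ 1 := by
  rw [emv_y]
  rcases h with ⟨h1, h2⟩ | ⟨h1, h2⟩ | ⟨h1, h2⟩
  · rw [if_neg h1, if_neg h2]
    split <;> omega
  · rw [if_neg h1, if_neg h2]
    split <;> omega
  · rw [if_neg h1, if_neg h2]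
    split <;> omega

/-! ### Witness lemmas: variables whose product with `x y_i y_j y_k` lies in `I'` -/

theorem z1_wit (n : ℕ) (i j k : Fin n) (hjk : (j : ℕ) ≤ (k : ℕ)) (hik : (i : ℕ) + 2 ≤ (k : ℕ)) :
    ∃ t ∈ Tset n i j k, t ≤ Finsupp.single (vz1 n) 1 + emv n i j k := by
  refine ⟨Finsupp.single (vx n) 1 + Finsupp.single (vy n j) 1 +
      Finsupp.single (vy n k) 1 + Finsupp.single (vz1 n) 1,
    Or.inl (Or.inr ⟨j, k, Fin.le_def.mpr hjk, by omega, rfl⟩), ?_⟩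
  rw [le_iff_exists_add]
  exact ⟨Finsupp.single (vy n i) 1, by unfold emv; abel⟩

theorem z2_wit (n : ℕ) (i j k : Fin n) (hij : (i : ℕ) ≤ (j : ℕ)) (hjk : (j : ℕ) ≤ (k : ℕ))
    (hik : (i : ℕ) + 2 ≤ (k : ℕ)) :
    ∃ t ∈ Tset n i j k, t ≤ Finsupp.single (vz2 n) 1 + emv n i j k := by
  have hk := k.isLt
  refine ⟨Finsupp.single (vx n) 1 + Finsupp.single (vy n i) 1 +
      Finsupp.single (vy n j) 1 + Finsupp.single (vz2 n) 1,
    Or.inl (Or.inl (Or.inr ⟨i, j, Fin.le_def.mpr hij, by omega, rfl⟩)), ?_⟩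
  rw [le_iff_exists_add]
  exact ⟨Finsupp.single (vy n k) 1, by unfold emv; abel⟩

theorem y_wit (n : ℕ) (i j k : Fin n) (hij : (i : ℕ) ≤ (j : ℕ)) (hjk : (j : ℕ) ≤ (k : ℕ))
    (hik : (i : ℕ) + 2 ≤ (k : ℕ)) (l : Fin n)
    (hC : (l : ℕ) < (j : ℕ) ∨ ((i : ℕ) + 2 ≤ (l : ℕ) ∧ (j : ℕ) ≤ (l : ℕ) ∧ (l : ℕ) < (k : ℕ)) ∨
      (j : ℕ) + 2 ≤ (l : ℕ)) :
    ∃ t ∈ Tset n i j k, t ≤ Finsupp.single (vy n l) 1 + emv n i j k := by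
  rcases hC with h | ⟨h1, h2, h3⟩ | h
  · by_cases hli : (l : ℕ) < (i : ℕ)
    · refine ⟨Finsupp.single (vx n) 1 + Finsupp.single (vy n l) 1 +
          Finsupp.single (vy n j) 1 + Finsupp.single (vy n k) 1,
        Or.inr ⟨l, j, k, Fin.le_def.mpr (by omega), Fin.le_def.mpr hjk, by omega,
          Or.inl (Fin.lt_def.mpr hli), rfl⟩, ?_⟩
      rw [le_iff_exists_add]
      exact ⟨Finsupp.single (vy n i) 1, by unfold emv; abel⟩
    · refine ⟨Finsupp.single (vx n) 1 + Finsupp.single (vy n i) 1 +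
          Finsupp.single (vy n l) 1 + Finsupp.single (vy n k) 1,
        Or.inr ⟨i, l, k, Fin.le_def.mpr (by omega), Fin.le_def.mpr (by omega), hik,
          Or.inr ⟨rfl, Or.inl (Fin.lt_def.mpr h)⟩, rfl⟩, ?_⟩
      rw [le_iff_exists_add]
      exact ⟨Finsupp.single (vy n j) 1, by unfold emv; abel⟩
  · refine ⟨Finsupp.single (vx n) 1 + Finsupp.single (vy n i) 1 +
        Finsupp.single (vy n j) 1 + Finsupp.single (vy n l) 1,
      Or.inr ⟨i, j, l, Fin.le_def.mpr hij, Fin.le_def.mpr h2, h1,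
        Or.inr ⟨rfl, Or.inr ⟨rfl, Fin.lt_def.mpr h3⟩⟩, rfl⟩, ?_⟩
    rw [le_iff_exists_add]
    exact ⟨Finsupp.single (vy n k) 1, by unfold emv; abel⟩
  · refine ⟨(Finsupp.single (vy n i) 1 + Finsupp.single (vy n k) 1) +
        (Finsupp.single (vy n j) 1 + Finsupp.single (vy n l) 1),
      Or.inl (Or.inl (Or.inl (Or.inl ⟨vy n i, vy n k, vy n j, vy n l, ?_, ?_, ?_, ?_, rfl⟩))),
      ?_⟩
    · rw [vy_val]; omega
    · rw [vy_val, vy_val]; omega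
    · rw [vy_val]; omega
    · rw [vy_val, vy_val]; omega
    · rw [le_iff_exists_add]
      exact ⟨Finsupp.single (vx n) 1, by unfold emv; abel⟩

/-! ### The main combinatorial step -/

theorem st2d_main (n : ℕ) (i j k : Fin n) (hij : (i : ℕ) ≤ (j : ℕ)) (hjk : (j : ℕ) ≤ (k : ℕ))
    (hik : (i : ℕ) + 2 ≤ (k : ℕ)) :
    ∀ t ∈ Tset n i j k, ∀ e : Fin (n+3) →₀ ℕ, t ≤ e + emv n i j k →
      ∃ v, e v ≠ 0 ∧ ∃ t' ∈ Tset n i j k, t' ≤ Finsupp.single v 1 + emv n i j k := by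
  rintro t ht e hle
  rcases ht with (((ht | ht) | ht) | ht) | ht
  · -- J² generators
    obtain ⟨a, b, c, d, h1a, h2ab, h1c, h2cd, rfl⟩ := ht
    by_cases hz1 : a = vz1 n ∨ b = vz1 n ∨ c = vz1 n ∨ d = vz1 n
    · refine ⟨vz1 n, ?_, z1_wit n i j k hjk hik⟩
      have happ := Finsupp.le_def.mp hle (vz1 n)
      rw [Finsupp.add_apply, Finsupp.add_apply, Finsupp.add_apply, Finsupp.add_apply,
        emv_z1] at happ
      rcases hz1 with rfl | rfl | rfl | rfl <;>
        rw [Finsupp.single_eq_same] at happ <;> omega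
    by_cases hz2 : a = vz2 n ∨ b = vz2 n ∨ c = vz2 n ∨ d = vz2 n
    · refine ⟨vz2 n, ?_, z2_wit n i j k hij hjk hik⟩
      have happ := Finsupp.le_def.mp hle (vz2 n)
      rw [Finsupp.add_apply, Finsupp.add_apply, Finsupp.add_apply, Finsupp.add_apply,
        emv_z2] at happ
      rcases hz2 with rfl | rfl | rfl | rfl <;>
        rw [Finsupp.single_eq_same] at happ <;> omega
    push_neg at hz1 hz2
    -- all four variables are `y`'s
    have hcoe : ∀ w : Fin (n+3), w ≠ vz1 n → w ≠ vz2 n → 1 ≤ (w : ℕ) →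
        ∃ α : Fin n, w = vy n α := by
      intro w hw1 hw2 hw3
      have hwlt := w.isLt
      have hne1 : (w : ℕ) ≠ 1 := fun h => hw1 (Fin.ext h)
      have hne2 : (w : ℕ) ≠ n + 2 := fun h => hw2 (Fin.ext h)
      exact ⟨⟨(w : ℕ) - 2, by omega⟩, Fin.ext (show (w : ℕ) = (w : ℕ) - 2 + 2 by omega)⟩
    obtain ⟨α, rfl⟩ := hcoe a hz1.1 hz2.1 h1a
    obtain ⟨β, rfl⟩ := hcoe b hz1.2.1 hz2.2.1 (by omega)
    obtain ⟨γ, rfl⟩ := hcoe c hz1.2.2.1 hz2.2.2.1 h1c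
    obtain ⟨δ, rfl⟩ := hcoe d hz1.2.2.2 hz2.2.2.2 (by omega)
    rw [vy_val, vy_val] at h2ab
    rw [vy_val, vy_val] at h2cd
    obtain ⟨l₀, hC0, hpat⟩ := st2d_core2 (i : ℕ) (j : ℕ) (k : ℕ) (α : ℕ) (β : ℕ) (γ : ℕ)
      (δ : ℕ) hij hjk hik (by omega) (by omega)
    have key : ∀ w : Fin n, (l₀ : ℕ) = (w : ℕ) →
        emv n i j k (vy n w) <
          (if (α : ℕ) = (w : ℕ) then 1 else 0) + (if (β : ℕ) = (w : ℕ) then 1 else 0) +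
            ((if (γ : ℕ) = (w : ℕ) then 1 else 0) + (if (δ : ℕ) = (w : ℕ) then 1 else 0)) →
        ∃ v, e v ≠ 0 ∧ ∃ t' ∈ Tset n i j k, t' ≤ Finsupp.single v 1 + emv n i j k := by
      intro w hw hlt
      have happ := Finsupp.le_def.mp hle (vy n w)
      rw [Finsupp.add_apply, Finsupp.add_apply, Finsupp.add_apply, Finsupp.add_apply,
        yy_apply, yy_apply, yy_apply, yy_apply] at happ
      refine ⟨vy n w, ?_, y_wit n i j k hij hjk hik w (by omega)⟩
      omega
    rcases hpat with ⟨hin, hne1, hne2, hne3⟩ | ⟨⟨hin1, hin2⟩, hle1⟩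
    · -- single occurrence, not among i j k
      rcases hin with h | h | h | h
      · exact key α (by omega) (by
          have h0 := emv_eq_zero n i j k α (by omega) (by omega) (by omega)
          rw [if_pos (by omega : (α : ℕ) = (α : ℕ))]; omega)
      · exact key β (by omega) (by
          have h0 := emv_eq_zero n i j k β (by omega) (by omega) (by omega)
          rw [if_pos (by omega : (β : ℕ) = (β : ℕ))]; omega)
      · exact key γ (by omega) (by
          have h0 := emv_eq_zero n i j k γ (by omega) (by omega) (by omega)
          rw [if_pos (by omega : (γ : ℕ) = (γ : ℕ))]; omega)
      · exact key δ (by omega) (by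
          have h0 := emv_eq_zero n i j k δ (by omega) (by omega) (by omega)
          rw [if_pos (by omega : (δ : ℕ) = (δ : ℕ))]; omega)
    · -- double occurrence
      rcases hin1 with h1 | h1 <;> rcases hin2 with h2 | h2
      · exact key α (by omega) (by
          have h0 := emv_le_one n i j k α (by omega)
          rw [if_pos (by omega : (α : ℕ) = (α : ℕ)),
            if_pos (by omega : (γ : ℕ) = (α : ℕ))]; omega)
      · exact key α (by omega) (by
          have h0 := emv_le_one n i j k α (by omega)
          rw [if_pos (by omega : (α : ℕ) = (α : ℕ)),
            if_pos (by omega : (δ : ℕ) = (α : ℕ))]; omega)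
      · exact key β (by omega) (by
          have h0 := emv_le_one n i j k β (by omega)
          rw [if_pos (by omega : (β : ℕ) = (β : ℕ)),
            if_pos (by omega : (γ : ℕ) = (β : ℕ))]; omega)
      · exact key β (by omega) (by
          have h0 := emv_le_one n i j k β (by omega)
          rw [if_pos (by omega : (β : ℕ) = (β : ℕ)),
            if_pos (by omega : (δ : ℕ) = (β : ℕ))]; omega)
  · -- x z₁ z₂ y_l generators
    obtain ⟨l, rfl⟩ := ht
    refine ⟨vz1 n, ?_, z1_wit n i j k hjk hik⟩
    have happ := Finsupp.le_def.mp hle (vz1 n)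
    rw [Finsupp.add_apply, Finsupp.add_apply, Finsupp.add_apply, Finsupp.add_apply,
      emv_z1, Finsupp.single_eq_same] at happ
    omega
  · -- x y y z₂ generators
    obtain ⟨k', l', _, _, rfl⟩ := ht
    refine ⟨vz2 n, ?_, z2_wit n i j k hij hjk hik⟩
    have happ := Finsupp.le_def.mp hle (vz2 n)
    rw [Finsupp.add_apply, Finsupp.add_apply, Finsupp.add_apply, Finsupp.add_apply,
      emv_z2, Finsupp.single_eq_same] at happ
    omega
  · -- x y y z₁ generators
    obtain ⟨k', l', _, _, rfl⟩ := ht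
    refine ⟨vz1 n, ?_, z1_wit n i j k hjk hik⟩
    have happ := Finsupp.le_def.mp hle (vz1 n)
    rw [Finsupp.add_apply, Finsupp.add_apply, Finsupp.add_apply, Finsupp.add_apply,
      emv_z1, Finsupp.single_eq_same] at happ
    omega
  · -- lexicographically smaller triple generators
    obtain ⟨a, b, c, hab, hbc, hac, hlex, rfl⟩ := ht
    have hlex' : (a : ℕ) < (i : ℕ) ∨ ((a : ℕ) = (i : ℕ) ∧ ((b : ℕ) < (j : ℕ) ∨
        ((b : ℕ) = (j : ℕ) ∧ (c : ℕ) < (k : ℕ)))) := by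
      rcases hlex with h | ⟨h, h' | ⟨h', h''⟩⟩
      · exact Or.inl (Fin.lt_def.mp h)
      · exact Or.inr ⟨by rw [h], Or.inl (Fin.lt_def.mp h')⟩
      · exact Or.inr ⟨by rw [h], Or.inr ⟨by rw [h'], Fin.lt_def.mp h''⟩⟩
    obtain ⟨l₀, hC0, hpat⟩ := st2d_core3 (i : ℕ) (j : ℕ) (k : ℕ) (a : ℕ) (b : ℕ) (c : ℕ)
      hij hjk hik (Fin.le_def.mp hab) (Fin.le_def.mp hbc) hac hlex'
    have key : ∀ w : Fin n, (l₀ : ℕ) = (w : ℕ) →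
        emv n i j k (vy n w) <
          (if (a : ℕ) = (w : ℕ) then 1 else 0) + (if (b : ℕ) = (w : ℕ) then 1 else 0) +
            (if (c : ℕ) = (w : ℕ) then 1 else 0) →
        ∃ v, e v ≠ 0 ∧ ∃ t' ∈ Tset n i j k, t' ≤ Finsupp.single v 1 + emv n i j k := by
      intro w hw hlt
      have happ := Finsupp.le_def.mp hle (vy n w)
      rw [Finsupp.add_apply, Finsupp.add_apply, Finsupp.add_apply, Finsupp.add_apply,
        Finsupp.single_eq_of_ne' (vx_ne_vy n w), yy_apply, yy_apply, yy_apply] at happ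
      refine ⟨vy n w, ?_, y_wit n i j k hij hjk hik w (by omega)⟩
      omega
    rcases hpat with ⟨hin, hne1, hne2, hne3⟩ | ⟨hin, hle1⟩
    · rcases hin with h | h | h
      · exact key a (by omega) (by
          have h0 := emv_eq_zero n i j k a (by omega) (by omega) (by omega)
          rw [if_pos (by omega : (a : ℕ) = (a : ℕ))]; omega)
      · exact key b (by omega) (by
          have h0 := emv_eq_zero n i j k b (by omega) (by omega) (by omega)
          rw [if_pos (by omega : (b : ℕ) = (b : ℕ))]; omega)
      · exact key c (by omega) (by
          have h0 := emv_eq_zero n i j k c (by omega) (by omega) (by omega)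
          rw [if_pos (by omega : (c : ℕ) = (c : ℕ))]; omega)
    · rcases hin with ⟨h1, h2⟩ | ⟨h1, h2⟩ | ⟨h1, h2⟩
      · exact key a (by omega) (by
          have h0 := emv_le_one n i j k a (by omega)
          rw [if_pos (by omega : (a : ℕ) = (a : ℕ)),
            if_pos (by omega : (b : ℕ) = (a : ℕ))]; omega)
      · exact key a (by omega) (by
          have h0 := emv_le_one n i j k a (by omega)
          rw [if_pos (by omega : (a : ℕ) = (a : ℕ)),
            if_pos (by omega : (c : ℕ) = (a : ℕ))]; omega)
      · exact key b (by omega) (by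
          have h0 := emv_le_one n i j k b (by omega)
          rw [if_pos (by omega : (b : ℕ) = (b : ℕ)),
            if_pos (by omega : (c : ℕ) = (b : ℕ))]; omega)

/-! ### Rewriting the ideal as a monomial ideal -/

theorem st2d_span (K : Type*) [Field K] (n : ℕ) (i j k : Fin n) :
    (Jideal K n ^ 2 +
        Ideal.span { m | ∃ l : Fin n,
          m = X (vx n) * X (vz1 n) * X (vz2 n) * X (vy n l) } +
        Ideal.span { m | ∃ k' l' : Fin n, k' ≤ l' ∧
          ¬((k' : ℕ) = n - 1 ∧ (l' : ℕ) = n - 1) ∧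
          m = X (vx n) * X (vy n k') * X (vy n l') * X (vz2 n) } +
        Ideal.span { m | ∃ k' l' : Fin n, k' ≤ l' ∧
          ¬((k' : ℕ) = 0 ∧ (l' : ℕ) = 0) ∧
          m = X (vx n) * X (vy n k') * X (vy n l') * X (vz1 n) } +
        Ideal.span { m | ∃ i' j' k' : Fin n, i' ≤ j' ∧ j' ≤ k' ∧
          (i' : ℕ) + 2 ≤ (k' : ℕ) ∧
          (i' < i ∨ (i' = i ∧ (j' < j ∨ (j' = j ∧ k' < k)))) ∧
          m = X (vx n) * X (vy n i') * X (vy n j') * X (vy n k') }) =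
      Ideal.span ((fun s => monomial s (1 : K)) '' Tset n i j k) := by
  have e2 : Jideal K n ^ 2 = Ideal.span ((fun s => monomial s (1 : K)) ''
      {s : Fin (n+3) →₀ ℕ | ∃ a b c d : Fin (n+3), 1 ≤ (a : ℕ) ∧ (a : ℕ) + 2 ≤ (b : ℕ) ∧
        1 ≤ (c : ℕ) ∧ (c : ℕ) + 2 ≤ (d : ℕ) ∧
        s = (Finsupp.single a 1 + Finsupp.single b 1) +
            (Finsupp.single c 1 + Finsupp.single d 1)}) := by
    rw [pow_two, Jideal, Ideal.span_mul_span']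
    congr 1
    ext m
    constructor
    · rintro ⟨p, ⟨a, b, h1, h2, rfl⟩, q, ⟨c, d, h3, h4, rfl⟩, rfl⟩
      exact ⟨_, ⟨a, b, c, d, h1, h2, h3, h4, rfl⟩,
        by simp only [st2d_X2, monomial_mul, one_mul]⟩
    · rintro ⟨s, ⟨a, b, c, d, h1, h2, h3, h4, rfl⟩, rfl⟩
      exact ⟨X a * X b, ⟨a, b, h1, h2, rfl⟩, X c * X d, ⟨c, d, h3, h4, rfl⟩,
        by simp only [st2d_X2, monomial_mul, one_mul]⟩
  have eq2 : { m : MvPolynomial (Fin (n+3)) K | ∃ l : Fin n,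
      m = X (vx n) * X (vz1 n) * X (vz2 n) * X (vy n l) } =
      (fun s => monomial s (1 : K)) '' {s | ∃ l : Fin n,
        s = Finsupp.single (vx n) 1 + Finsupp.single (vz1 n) 1 +
          Finsupp.single (vz2 n) 1 + Finsupp.single (vy n l) 1} := by
    ext m
    constructor
    · rintro ⟨l, rfl⟩
      exact ⟨_, ⟨l, rfl⟩, by simp only [st2d_X4]⟩
    · rintro ⟨s, ⟨l, rfl⟩, rfl⟩
      exact ⟨l, by simp only [st2d_X4]⟩
  have eq3 : { m : MvPolynomial (Fin (n+3)) K | ∃ k' l' : Fin n, k' ≤ l' ∧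
      ¬((k' : ℕ) = n - 1 ∧ (l' : ℕ) = n - 1) ∧
      m = X (vx n) * X (vy n k') * X (vy n l') * X (vz2 n) } =
      (fun s => monomial s (1 : K)) '' {s | ∃ k' l' : Fin n, k' ≤ l' ∧
        ¬((k' : ℕ) = n - 1 ∧ (l' : ℕ) = n - 1) ∧
        s = Finsupp.single (vx n) 1 + Finsupp.single (vy n k') 1 +
          Finsupp.single (vy n l') 1 + Finsupp.single (vz2 n) 1} := by
    ext m
    constructor
    · rintro ⟨k', l', h1, h2, rfl⟩
      exact ⟨_, ⟨k', l', h1, h2, rfl⟩, by simp only [st2d_X4]⟩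
    · rintro ⟨s, ⟨k', l', h1, h2, rfl⟩, rfl⟩
      exact ⟨k', l', h1, h2, by simp only [st2d_X4]⟩
  have eq4 : { m : MvPolynomial (Fin (n+3)) K | ∃ k' l' : Fin n, k' ≤ l' ∧
      ¬((k' : ℕ) = 0 ∧ (l' : ℕ) = 0) ∧
      m = X (vx n) * X (vy n k') * X (vy n l') * X (vz1 n) } =
      (fun s => monomial s (1 : K)) '' {s | ∃ k' l' : Fin n, k' ≤ l' ∧
        ¬((k' : ℕ) = 0 ∧ (l' : ℕ) = 0) ∧
        s = Finsupp.single (vx n) 1 + Finsupp.single (vy n k') 1 +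
          Finsupp.single (vy n l') 1 + Finsupp.single (vz1 n) 1} := by
    ext m
    constructor
    · rintro ⟨k', l', h1, h2, rfl⟩
      exact ⟨_, ⟨k', l', h1, h2, rfl⟩, by simp only [st2d_X4]⟩
    · rintro ⟨s, ⟨k', l', h1, h2, rfl⟩, rfl⟩
      exact ⟨k', l', h1, h2, by simp only [st2d_X4]⟩
  have eq5 : { m : MvPolynomial (Fin (n+3)) K | ∃ i' j' k' : Fin n, i' ≤ j' ∧ j' ≤ k' ∧
      (i' : ℕ) + 2 ≤ (k' : ℕ) ∧
      (i' < i ∨ (i' = i ∧ (j' < j ∨ (j' = j ∧ k' < k)))) ∧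
      m = X (vx n) * X (vy n i') * X (vy n j') * X (vy n k') } =
      (fun s => monomial s (1 : K)) '' {s | ∃ i' j' k' : Fin n, i' ≤ j' ∧ j' ≤ k' ∧
        (i' : ℕ) + 2 ≤ (k' : ℕ) ∧
        (i' < i ∨ (i' = i ∧ (j' < j ∨ (j' = j ∧ k' < k)))) ∧
        s = Finsupp.single (vx n) 1 + Finsupp.single (vy n i') 1 +
          Finsupp.single (vy n j') 1 + Finsupp.single (vy n k') 1} := by
    ext m
    constructor
    · rintro ⟨i', j', k', h1, h2, h3, h4, rfl⟩
      exact ⟨_, ⟨i', j', k', h1, h2, h3, h4, rfl⟩, by simp only [st2d_X4]⟩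
    · rintro ⟨s, ⟨i', j', k', h1, h2, h3, h4, rfl⟩, rfl⟩
      exact ⟨i', j', k', h1, h2, h3, h4, by simp only [st2d_X4]⟩
  rw [e2, eq2, eq3, eq4, eq5, Ideal.add_eq_sup, Ideal.add_eq_sup, Ideal.add_eq_sup,
    Ideal.add_eq_sup, ← Ideal.span_union, ← Ideal.span_union, ← Ideal.span_union,
    ← Ideal.span_union, ← Set.image_union, ← Set.image_union, ← Set.image_union,
    ← Set.image_union]
  rfl

/-- Fix `1 ≤ i ≤ j ≤ k ≤ n` with `i + 2 ≤ k`.  With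
`I' = J² + (x z₁ z₂ y_l : 1 ≤ l ≤ n) + (x y_{k'} y_{l'} z₂ : k' ≤ l', (k',l') ≠ (n,n)) +
(x y_{k'} y_{l'} z₁ : k' ≤ l', (k',l') ≠ (1,1)) + (x y_{i'} y_{j'} y_{k'} :
i' ≤ j' ≤ k', i' + 2 ≤ k', (i',j',k')` dictionary-smaller than `(i,j,k))`, the colon ideal
`I' : (x y_i y_j y_k)` is generated by a subset of the variables.
(Indices are 0-indexed.) -/
theorem stage2d_colon (K : Type*) [Field K] (n : ℕ) (hn : 2 ≤ n) (i j k : Fin n)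
    (hij : i ≤ j) (hjk : j ≤ k) (hik : (i : ℕ) + 2 ≤ (k : ℕ)) :
    ∃ S : Set (Fin (n + 3)),
      ((Jideal K n ^ 2 +
          Ideal.span { m | ∃ l : Fin n,
            m = X (vx n) * X (vz1 n) * X (vz2 n) * X (vy n l) } +
          Ideal.span { m | ∃ k' l' : Fin n, k' ≤ l' ∧
            ¬((k' : ℕ) = n - 1 ∧ (l' : ℕ) = n - 1) ∧
            m = X (vx n) * X (vy n k') * X (vy n l') * X (vz2 n) } +
          Ideal.span { m | ∃ k' l' : Fin n, k' ≤ l' ∧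
            ¬((k' : ℕ) = 0 ∧ (l' : ℕ) = 0) ∧
            m = X (vx n) * X (vy n k') * X (vy n l') * X (vz1 n) } +
          Ideal.span { m | ∃ i' j' k' : Fin n, i' ≤ j' ∧ j' ≤ k' ∧
            (i' : ℕ) + 2 ≤ (k' : ℕ) ∧
            (i' < i ∨ (i' = i ∧ (j' < j ∨ (j' = j ∧ k' < k)))) ∧
            m = X (vx n) * X (vy n i') * X (vy n j') * X (vy n k') }).colon
        ((Ideal.span {X (vx n) * X (vy n i) * X (vy n j) * X (vy n k)} :
          Ideal (MvPolynomial (Fin (n + 3)) K)) : Set (MvPolynomial (Fin (n + 3)) K))) =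
      Ideal.span (MvPolynomial.X '' S) := by
  classical
  have hij' : (i : ℕ) ≤ (j : ℕ) := Fin.le_def.mp hij
  have hjk' : (j : ℕ) ≤ (k : ℕ) := Fin.le_def.mp hjk
  have hXm : (X (vx n) * X (vy n i) * X (vy n j) * X (vy n k) : MvPolynomial (Fin (n+3)) K) =
      monomial (emv n i j k) 1 := st2d_X4 _ _ _ _
  refine ⟨{v | ∃ t' ∈ Tset n i j k, t' ≤ Finsupp.single v 1 + emv n i j k}, ?_⟩
  apply le_antisymm
  · intro f hf
    rw [Ideal.mem_colon_span_singleton, st2d_span K n i j k, hXm] at hf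
    rw [mem_ideal_span_X_image]
    intro d hd
    have hd' : d + emv n i j k ∈ (f * monomial (emv n i j k) (1 : K)).support := by
      rw [MvPolynomial.mem_support_iff, coeff_mul_monomial, mul_one]
      exact MvPolynomial.mem_support_iff.mp hd
    obtain ⟨t, htT, htle⟩ := mem_ideal_span_monomial_image.mp hf _ hd'
    obtain ⟨v, hv, hwit⟩ := st2d_main n i j k hij' hjk' hik t htT d htle
    exact ⟨v, hwit, hv⟩
  · rw [Ideal.span_le]
    rintro p ⟨v, hv, rfl⟩
    rw [SetLike.mem_coe, Ideal.mem_colon_span_singleton, st2d_span K n i j k, hXm, X,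
      monomial_mul, one_mul, mem_ideal_span_monomial_image]
    intro xi hxi
    rw [support_monomial, if_neg one_ne_zero, Finset.mem_singleton] at hxi
    subst hxi
    exact hv
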